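/- Let n ≥ 1. For every permutation p of {1,…,n}, the last entry p_n is a leaf of the minmax tree T^m_p. -/

import Mathlib

/-- Binary trees with natural-number labels, used to model minmax trees of
permutations. -/
inductive BTree where
  | nil : BTree
  | node : ℕ → BTree → BTree → BTree
deriving DecidableEq, Repr

namespace BTree

/-- The label of the root (if any). -/
def rootVal : BTree → Option ℕ
  | .nil => none
  | .node v _ _ => some v

/-- Whether the value `x` occurs as a label in the tree. -/
def memB : BTree → ℕ → Bool
  | .nil, _ => false
  | .node v l r, x => (x == v) || memB l x || memB r x

/-- The number of children of the (unique, for permutations) node labelled `x`. -/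
def numChildren : BTree → ℕ → ℕ
  | .nil, _ => 0
  | .node v l r, x =>
      if x = v then (if l = .nil then 0 else 1) + (if r = .nil then 0 else 1)
      else numChildren l x + numChildren r x

/-- `x` is a leaf of the tree: it occurs in the tree and has no children. -/
def IsLeaf (t : BTree) (x : ℕ) : Prop := t.memB x = true ∧ t.numChildren x = 0

instance (t : BTree) (x : ℕ) : Decidable (t.IsLeaf x) := by unfold IsLeaf; infer_instance

/-- `childB t x y = true` iff `x` is a child of `y` in `t`, i.e. `x` is the root of
the left or the right subtree hanging from `y`. -/
def childB : BTree → ℕ → ℕ → Bool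
  | .nil, _, _ => false
  | .node v l r, x, y =>
      ((y == v) && (l.rootVal == some x || r.rootVal == some x))
      || childB l x y || childB r x y

/-- `ancB t x y = true` iff `x` is a (strict) ancestor of `y` in `t`, i.e. `y` lies
in a subtree hanging from `x`. -/
def ancB : BTree → ℕ → ℕ → Bool
  | .nil, _, _ => false
  | .node v l r, x, y =>
      ((x == v) && (memB l y || memB r y)) || ancB l x y || ancB r x y

end BTree

/-- `x` is the leftmost-eligible extreme letter of `l`: the minimum or the maximum. -/
def isExtreme (l : List ℕ) (x : ℕ) : Bool :=
  (l.min? == some x) || (l.max? == some x)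

/-- Fuelled construction of the minmax tree of a list of distinct naturals:
split the list as `u ++ [m] ++ v` where `m` is the leftmost of the minimum and
maximum letters, put `m` at the root and recurse on `u` (left) and `v` (right). -/
def mmAux : ℕ → List ℕ → BTree
  | 0, _ => .nil
  | fuel+1, l =>
    if l.isEmpty then .nil
    else
      let k := l.findIdx (isExtreme l)
      .node (l.getD k 0) (mmAux fuel (l.take k)) (mmAux fuel (l.drop (k+1)))

/-- The minmax tree `T^m_p` of a word `l` (with distinct letters). -/
def minmaxTree (l : List ℕ) : BTree := mmAux l.length l

/-- The word `p_1 p_2 … p_n` on the letters `{1,…,n}` associated to a permutation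
`p` of `Fin n`. -/
def permList (n : ℕ) (p : Equiv.Perm (Fin n)) : List ℕ :=
  List.ofFn (fun i => (p i : ℕ) + 1)

/-- The `i`-th entry `p_i` (1-indexed) of the permutation `p`. -/
def entryAt (n : ℕ) (p : Equiv.Perm (Fin n)) (i : ℕ) : ℕ :=
  (permList n p).getD (i - 1) 0

lemma mmAux_nil (n : ℕ) : mmAux n [] = .nil := by cases n <;> simp [mmAux]

lemma min?_le' {l : List ℕ} {a b : ℕ} (h : l.min? = some a) (hb : b ∈ l) : a ≤ b :=
  (List.min?_eq_some_iff.1 h).2 b hb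

lemma le_max?' {l : List ℕ} {a b : ℕ} (h : l.max? = some a) (hb : b ∈ l) : b ≤ a :=
  (List.max?_eq_some_iff.1 h).2 b hb

lemma findIdx_lt_length {l : List ℕ} (h : l ≠ []) :
    l.findIdx (isExtreme l) < l.length := by
  obtain ⟨a, ha⟩ : ∃ a, l.min? = some a := by
    cases hm : l.min? with
    | none => exact absurd (List.min?_eq_none_iff.1 hm) h
    | some a => exact ⟨a, rfl⟩
  exact List.findIdx_lt_length_of_exists
    ⟨a, List.min?_mem ha, by simp [isExtreme, ha]⟩

lemma numChildren_of_not_memB (t : BTree) (x : ℕ) (h : t.memB x = false) :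
    t.numChildren x = 0 := by
  induction t with
  | nil => rfl
  | node v l r ihl ihr =>
    simp only [BTree.memB, Bool.or_eq_false_iff, beq_eq_false_iff_ne, ne_eq] at h
    simp [BTree.numChildren, h.1.1, ihl h.1.2, ihr h.2]

lemma mem_of_memB : ∀ (fuel : ℕ) (l : List ℕ) (x : ℕ),
    (mmAux fuel l).memB x = true → x ∈ l := by
  intro fuel
  induction fuel with
  | zero => intro l x h; simp [mmAux, BTree.memB] at h
  | succ n ih =>
    intro l x h
    unfold mmAux at h
    by_cases he : l.isEmpty
    · rw [if_pos he] at h; simp [BTree.memB] at h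
    · rw [if_neg he] at h
      have hne : l ≠ [] := by simpa [List.isEmpty_iff] using he
      have hk := findIdx_lt_length hne
      simp only [BTree.memB, Bool.or_eq_true, beq_iff_eq] at h
      rcases h with (h | h) | h
      · subst h
        rw [List.getD_eq_getElem l 0 hk]
        exact List.getElem_mem hk
      · exact List.mem_of_mem_take (ih _ _ h)
      · exact List.mem_of_mem_drop (ih _ _ h)

lemma not_memB_of_not_mem (fuel : ℕ) (l : List ℕ) (x : ℕ) (h : x ∉ l) :
    (mmAux fuel l).memB x = false := by
  by_contra hc
  exact h (mem_of_memB fuel l x (by simpa using hc))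

lemma last_leaf : ∀ (fuel : ℕ) (l : List ℕ), l.Nodup → l ≠ [] → l.length ≤ fuel →
    (mmAux fuel l).IsLeaf (l.getD (l.length - 1) 0) := by
  intro fuel
  induction fuel with
  | zero =>
    intro l _ hne hl
    exact absurd (List.length_eq_zero_iff.1 (Nat.le_zero.1 hl)) hne
  | succ n ih =>
    intro l hnd hne hl
    have he : l.isEmpty = false := by simpa [List.isEmpty_iff] using hne
    have hk : l.findIdx (isExtreme l) < l.length := findIdx_lt_length hne
    have hlpos : 0 < l.length := List.length_pos_iff.2 hne
    set k := l.findIdx (isExtreme l) with hkdef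
    unfold mmAux
    rw [if_neg (by simp [he])]
    show (BTree.node (l.getD k 0) (mmAux n (l.take k))
      (mmAux n (l.drop (k + 1)))).IsLeaf (l.getD (l.length - 1) 0)
    by_cases hcase : k = l.length - 1
    · -- the extreme position is last: then the list has length 1
      have h1 : l.length = 1 := by
        by_contra hlen
        have h2 : 2 ≤ l.length := by omega
        obtain ⟨a, ha⟩ : ∃ a, l.min? = some a := by
          cases hm : l.min? with
          | none => exact absurd (List.min?_eq_none_iff.1 hm) hne
          | some a => exact ⟨a, rfl⟩
        obtain ⟨b, hb⟩ : ∃ b, l.max? = some b := by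
          cases hm : l.max? with
          | none => exact absurd (List.max?_eq_none_iff.1 hm) hne
          | some b => exact ⟨b, rfl⟩
        obtain ⟨i, hi, hia⟩ := List.getElem_of_mem (List.min?_mem ha)
        obtain ⟨j, hj, hjb⟩ := List.getElem_of_mem (List.max?_mem hb)
        have hik : ¬ i < k := fun hlt => by
          have := List.not_of_lt_findIdx hlt
          simp [isExtreme, hia, ha] at this
        have hjk : ¬ j < k := fun hlt => by
          have := List.not_of_lt_findIdx hlt
          simp [isExtreme, hjb, hb] at this
        have hjeq : j = i := by omega
        subst hjeq
        have hab : a = b := hia.symm.trans hjb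
        have h01 : l[0]'(by omega) ≠ l[1]'(by omega) := by
          intro hc
          rw [hnd.getElem_inj_iff] at hc
          omega
        have e0 : l[0]'(by omega) = a := le_antisymm
          (by rw [hab]; exact le_max?' hb (List.getElem_mem (by omega)))
          (min?_le' ha (List.getElem_mem (by omega)))
        have e1 : l[1]'(by omega) = a := le_antisymm
          (by rw [hab]; exact le_max?' hb (List.getElem_mem (by omega)))
          (min?_le' ha (List.getElem_mem (by omega)))
        exact h01 (e0.trans e1.symm)
      have hk0 : k = 0 := by omega
      rw [hk0, h1]
      simp only [List.take_zero, List.drop_eq_nil_of_le (by omega : l.length ≤ 0 + 1),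
        mmAux_nil]
      exact ⟨by simp [BTree.memB], by simp [BTree.numChildren]⟩
    · -- the extreme position is not last: recurse into the right subtree
      have hklt : k < l.length - 1 := by omega
      have hdlen : (l.drop (k + 1)).length = l.length - (k + 1) := List.length_drop
      have hdpos : l.drop (k + 1) ≠ [] := by
        intro hc
        have := congrArg List.length hc
        simp only [hdlen, List.length_nil] at this
        omega
      have hdn : (l.drop (k + 1)).length ≤ n := by omega
      have hdnd : (l.drop (k + 1)).Nodup := (List.drop_sublist _ _).nodup hnd
      have hIH := ih (l.drop (k + 1)) hdnd hdpos hdn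
      -- the last entry of the tail equals the last entry of l
      have hlast : (l.drop (k + 1)).getD ((l.drop (k + 1)).length - 1) 0
          = l.getD (l.length - 1) 0 := by
        have h1 : (l.drop (k + 1)).length - 1 < (l.drop (k + 1)).length := by omega
        have h2 : l.length - 1 < l.length := by omega
        rw [List.getD_eq_getElem _ 0 h1, List.getD_eq_getElem l 0 h2, List.getElem_drop]
        congr 1
        omega
      rw [hlast] at hIH
      have hxval : l.getD (l.length - 1) 0 = l[l.length - 1]'(by omega) :=
        List.getD_eq_getElem l 0 (by omega)
      -- the last entry is not in the prefix before the root
      have hxtake : l.getD (l.length - 1) 0 ∉ l.take k := by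
        intro hmem
        obtain ⟨i, hi, hix⟩ := List.getElem_of_mem hmem
        rw [List.getElem_take] at hix
        have hilt : i < k := by
          rw [List.length_take] at hi
          omega
        rw [hxval] at hix
        rw [hnd.getElem_inj_iff] at hix
        omega
      -- the last entry is not the root label
      have hxroot : l.getD (l.length - 1) 0 ≠ l.getD k 0 := by
        rw [List.getD_eq_getElem l 0 hk, hxval]
        intro hc
        rw [hnd.getElem_inj_iff] at hc
        omega
      refine ⟨?_, ?_⟩
      · simp only [BTree.memB, Bool.or_eq_true]
        exact Or.inr hIH.1
      · simp only [BTree.numChildren, if_neg hxroot]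
        rw [numChildren_of_not_memB _ _ (not_memB_of_not_mem n _ _ hxtake), hIH.2]

/-- For `n ≥ 1`, in every permutation `p` of `{1,…,n}` the last
entry `p_n` is a leaf of the minmax tree. -/
theorem last_entry_leaf (n : ℕ) (hn : 1 ≤ n) (p : Equiv.Perm (Fin n)) :
    (minmaxTree (permList n p)).IsLeaf (entryAt n p n) := by
  have hlen : (permList n p).length = n := by simp [permList]
  have hnd : (permList n p).Nodup := by
    rw [permList, List.nodup_ofFn]
    intro i j hij
    simp only at hij
    exact p.injective (Fin.ext (by omega))
  have hne : permList n p ≠ [] := by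
    intro hc; rw [← hlen, hc] at hn; simp at hn
  have h := last_leaf (permList n p).length (permList n p) hnd hne le_rfl
  rw [hlen] at h
  rw [entryAt, minmaxTree, hlen]
  exact h
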